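/- Let F be a connected component of a compact set A in ℝ². Then for every open set U ⊇ F there exists an open set V with F ⊆ V, cl(V) compact and contained in U, and ∂V ∩ A = ∅. -/

import Mathlib

open Set Metric

lemma exists_clopen_component_subset {X : Type*} [TopologicalSpace X] [T2Space X]
    [CompactSpace X] (x : X) {U : Set X} (hU : IsOpen U) (h : connectedComponent x ⊆ U) :
    ∃ Z : Set X, IsClopen Z ∧ x ∈ Z ∧ Z ⊆ U := by
  have key := connectedComponent_eq_iInter_isClopen x
  have hcov : Uᶜ ∩ ⋂ s : { s : Set X // IsClopen s ∧ x ∈ s }, (s : Set X) = ∅ := by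
    rw [← key]
    rw [Set.eq_empty_iff_forall_notMem]
    rintro y ⟨hy1, hy2⟩
    exact hy1 (h hy2)
  obtain ⟨t, ht⟩ := (hU.isClosed_compl.isCompact).elim_finite_subfamily_closed
    (fun s : { s : Set X // IsClopen s ∧ x ∈ s } => (s : Set X))
    (fun s => s.2.1.1) hcov
  refine ⟨⋂ s ∈ t, (s : Set X), isClopen_biInter_finset fun s _ => s.2.1, ?_, ?_⟩
  · exact Set.mem_iInter₂.2 fun s _ => s.2.2
  · intro y hy
    by_contra hyU
    exact Set.eq_empty_iff_forall_notMem.1 ht y ⟨hyU, Set.mem_iInter₂.2 fun s hs =>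
      Set.mem_iInter₂.1 hy s hs⟩

/-- if `F` is a connected component of a compact set `A ⊆ ℝ²`, then for
every open `U ⊇ F` there is an open set `V` with `F ⊆ V ⊂⊂ U` and `∂V ∩ A = ∅`. -/
theorem component_separation (A : Set (EuclideanSpace ℝ (Fin 2))) (hA : IsCompact A)
    (F : Set (EuclideanSpace ℝ (Fin 2))) (x : EuclideanSpace ℝ (Fin 2)) (hx : x ∈ A)
    (hF : F = connectedComponentIn A x)
    (U : Set (EuclideanSpace ℝ (Fin 2))) (hU : IsOpen U) (hFU : F ⊆ U) :
    ∃ V : Set (EuclideanSpace ℝ (Fin 2)), IsOpen V ∧ F ⊆ V ∧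
      IsCompact (closure V) ∧ closure V ⊆ U ∧ frontier V ∩ A = ∅ := by
  haveI : CompactSpace A := isCompact_iff_compactSpace.1 hA
  have himg : F = (↑) '' connectedComponent (⟨x, hx⟩ : A) := by
    rw [hF, connectedComponentIn_eq_image hx]
  have hU' : IsOpen ((↑) ⁻¹' U : Set A) := hU.preimage continuous_subtype_val
  have hsub : connectedComponent (⟨x, hx⟩ : A) ⊆ (↑) ⁻¹' U := by
    intro y hy
    exact hFU (himg ▸ Set.mem_image_of_mem _ hy)
  obtain ⟨Z, hZ, hxZ, hZU⟩ := exists_clopen_component_subset (⟨x, hx⟩ : A) hU' hsub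
  set K : Set (EuclideanSpace ℝ (Fin 2)) := (↑) '' Z with hKdef
  have hKcomp : IsCompact K := (hZ.1.isCompact).image continuous_subtype_val
  have hKU : K ⊆ U := by rintro _ ⟨z, hz, rfl⟩; exact hZU hz
  have hFK : F ⊆ K := by
    rw [himg]
    exact Set.image_mono (hZ.connectedComponent_subset hxZ)
  have hAK : IsCompact (A \ K) := by
    have : A \ K = (↑) '' (Zᶜ : Set A) := by
      ext y
      constructor
      · rintro ⟨hyA, hyK⟩
        exact ⟨⟨y, hyA⟩, fun h => hyK ⟨⟨y, hyA⟩, h, rfl⟩, rfl⟩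
      · rintro ⟨z, hz, rfl⟩
        exact ⟨z.2, fun ⟨w, hw, hwz⟩ => hz (by rwa [← Subtype.ext hwz.symm] at hw)⟩
    rw [this]
    exact (hZ.2.isClosed_compl.isCompact).image continuous_subtype_val
  have hdisj : K ⊆ U ∩ (A \ K)ᶜ := fun y hy =>
    ⟨hKU hy, fun h => h.2 hy⟩
  obtain ⟨δ, hδ, hcth⟩ := hKcomp.exists_cthickening_subset_open
    (hU.inter hAK.isClosed.isOpen_compl) hdisj
  refine ⟨thickening δ K, isOpen_thickening, hFK.trans (self_subset_thickening hδ K), ?_, ?_, ?_⟩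
  · exact (hKcomp.isBounded.thickening.isCompact_closure)
  · exact (closure_thickening_subset_cthickening δ K).trans (hcth.trans (Set.inter_subset_left))
  · rw [Set.eq_empty_iff_forall_notMem]
    rintro y ⟨hyf, hyA⟩
    have hycth : y ∈ cthickening δ K :=
      closure_thickening_subset_cthickening δ K (frontier_subset_closure hyf)
    have := hcth hycth
    have hyK : y ∉ K := fun hyK => by
      have : y ∈ interior (thickening δ K) := by
        rw [isOpen_thickening.interior_eq]
        exact self_subset_thickening hδ K hyK
      exact hyf.2 this
    exact this.2 ⟨hyA, hyK⟩
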